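/- Let 𝒜 be a well-formed DFA over a finite alphabet Σ, i.e., a DFA whose set of accepting states is the singleton {q₀} consisting of its start state, and let Δ be its set of transitions (q,a,q') with δ q a = q'. For a Parikh vector p : Σ → ℕ, let W(𝒜,p) be the set of all maps w : Δ → ℕ such that (i) for every a ∈ Σ, p a = Σ_{(q,a,q') ∈ Δ} w(q,a,q'), and (ii) the multigraph on the states of 𝒜 that has, for each transition δ ∈ Δ, w(δ) parallel edges from its source state to its target state, is Eulerian and its positive-weight part together with q₀ is connected. Then N(𝒜,p) = Σ_{w ∈ W(𝒜,p)} e_{q₀}(𝒜,w), where e_{q₀}(𝒜,w) is the number of finite sequences of transitions that form a walk starting and ending at q₀ and use each transition δ ∈ Δ exactly w(δ) times. -/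

import Mathlib

open Finset

/-- `N(A,p)`: the number of words accepted by the DFA `A` whose Parikh image is `p`,
i.e. in which every letter `a` occurs exactly `p a` times. -/
noncomputable def parikhCount {σ Q : Type} [DecidableEq σ] (A : DFA σ Q) (p : σ → ℕ) : ℕ :=
  Nat.card {l : List σ // l ∈ A.accepts ∧ ∀ a : σ, l.count a = p a}

/-- The set `W(A,p)` of edge multiplicity assignments `w` on the transitions
`Δ = Q × σ` of the DFA `A` (the transition `(q,a)` goes from `q` to `A.step q a`) such
that (i) for every letter `a`, `p a` is the total multiplicity of transitions labelled
`a`; and (ii) the multigraph with `w d` parallel copies of each transition `d` is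
Eulerian and its positive-weight part together with the start state is connected. -/
def parikhFlows {σ Q : Type} [Fintype σ] [Fintype Q] [DecidableEq σ] [DecidableEq Q]
    (A : DFA σ Q) (p : σ → ℕ) : Set (Q × σ → ℕ) :=
  {w |
    (∀ a : σ, p a = ∑ q : Q, w (q, a)) ∧
    (∀ v : Q,
      (∑ d ∈ univ.filter (fun d : Q × σ => A.step d.1 d.2 = v), w d) =
        ∑ a : σ, w (v, a)) ∧
    (∀ u ∈ ({A.start} : Set Q) ∪ {q | ∃ a : σ, 0 < w (q, a)} ∪
        {q | ∃ d : Q × σ, 0 < w d ∧ A.step d.1 d.2 = q},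
      ∀ v ∈ ({A.start} : Set Q) ∪ {q | ∃ a : σ, 0 < w (q, a)} ∪
        {q | ∃ d : Q × σ, 0 < w d ∧ A.step d.1 d.2 = q},
      Relation.ReflTransGen
        (fun x y => ∃ d : Q × σ, 0 < w d ∧ d.1 = x ∧ A.step d.1 d.2 = y) u v)}

/-- `e_{q₀}(A,w)`: the number of finite sequences of transitions of the DFA `A` that
form a walk starting and ending at the start state and use each transition `d` exactly
`w d` times. -/
noncomputable def closedWalkCount {σ Q : Type} [DecidableEq σ] [DecidableEq Q]
    (A : DFA σ Q) (w : Q × σ → ℕ) : ℕ :=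
  Nat.card {L : List (Q × σ) //
    L.Chain' (fun d₁ d₂ => A.step d₁.1 d₁.2 = d₂.1) ∧
    (∀ h : L ≠ [], (L.head h).1 = A.start ∧
      A.step (L.getLast h).1 (L.getLast h).2 = A.start) ∧
    ∀ d : Q × σ, L.count d = w d}

namespace PC

open Relation

set_option linter.unusedSectionVars false

section Counting
variable {σ Q : Type} [Fintype σ] [Fintype Q] [DecidableEq σ] [DecidableEq Q]

lemma count_map_eq_sum {β : Type} [DecidableEq β]
    (f : Q × σ → β) (L : List (Q × σ)) (b : β) :
    (L.map f).count b = ∑ e ∈ univ.filter (fun e => f e = b), L.count e := by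
  induction L with
  | nil => simp
  | cons x L ih =>
      simp only [List.map_cons, List.count_cons, ih, Finset.sum_add_distrib]
      congr 1
      simp only [beq_iff_eq]
      rw [Finset.sum_ite_eq]
      simp

lemma sum_count_fst (L : List (Q × σ)) (v : Q) :
    ∑ a : σ, L.count (v, a) = (L.map Prod.fst).count v := by
  induction L with
  | nil => simp
  | cons x L ih =>
      simp only [List.map_cons, List.count_cons, Finset.sum_add_distrib, ih, beq_iff_eq]
      congr 1
      rcases x with ⟨q, b⟩
      by_cases h : q = v
      · subst h
        rw [if_pos rfl, Finset.sum_eq_single b] <;> simp +contextual [Prod.ext_iff, eq_comm]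
      · rw [if_neg (by simpa [eq_comm] using h), Finset.sum_eq_zero]
        intro a _
        rw [if_neg]
        intro hc
        exact h (congrArg Prod.fst hc)

lemma sum_count_snd (L : List (Q × σ)) (b : σ) :
    ∑ q : Q, L.count (q, b) = (L.map Prod.snd).count b := by
  induction L with
  | nil => simp
  | cons x L ih =>
      simp only [List.map_cons, List.count_cons, Finset.sum_add_distrib, ih, beq_iff_eq]
      congr 1
      rcases x with ⟨q, a⟩
      by_cases h : a = b
      · subst h
        rw [if_pos rfl, Finset.sum_eq_single q] <;> simp +contextual [Prod.ext_iff, eq_comm]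
      · rw [if_neg (by simpa [eq_comm] using h), Finset.sum_eq_zero]
        intro c _
        rw [if_neg]
        intro hc
        exact h (congrArg Prod.snd hc)

lemma length_eq_sum_count (L : List (Q × σ)) :
    L.length = ∑ e : Q × σ, L.count e := by
  induction L with
  | nil => simp
  | cons x L ih =>
      simp only [List.length_cons, List.count_cons, Finset.sum_add_distrib, ih, beq_iff_eq]
      rw [Finset.sum_ite_eq]
      simp

end Counting

section Trace
variable {σ Q : Type} [DecidableEq σ] [DecidableEq Q]

def trace (A : DFA σ Q) : Q → List σ → List (Q × σ)
  | _, [] => []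
  | q, a :: l => (q, a) :: trace A (A.step q a) l

@[simp] lemma trace_nil (A : DFA σ Q) (q : Q) : trace A q [] = [] := rfl
@[simp] lemma trace_cons (A : DFA σ Q) (q : Q) (a : σ) (l : List σ) :
    trace A q (a :: l) = (q, a) :: trace A (A.step q a) l := rfl

@[simp] lemma trace_map_snd (A : DFA σ Q) (q : Q) (l : List σ) :
    (trace A q l).map Prod.snd = l := by
  induction l generalizing q with
  | nil => rfl
  | cons a l ih => simp [ih]

lemma trace_eq_nil_iff (A : DFA σ Q) (q : Q) (l : List σ) :
    trace A q l = [] ↔ l = [] := by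
  cases l <;> simp

lemma trace_chain' (A : DFA σ Q) (q : Q) (l : List σ) :
    (trace A q l).Chain' (fun d₁ d₂ => A.step d₁.1 d₁.2 = d₂.1) := by
  induction l generalizing q with
  | nil => exact List.isChain_nil
  | cons a l ih =>
      rw [trace_cons, List.Chain', List.isChain_cons]
      refine ⟨?_, ih _⟩
      intro y hy
      cases l with
      | nil => simp at hy
      | cons b l =>
          simp only [trace_cons, List.head?_cons, Option.mem_def, Option.some.injEq] at hy
          exact congrArg Prod.fst hy

lemma trace_head (A : DFA σ Q) (q : Q) (l : List σ) (h : trace A q l ≠ []) :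
    ((trace A q l).head h).1 = q := by
  cases l with
  | nil => simp at h
  | cons a l => simp

lemma trace_getLast (A : DFA σ Q) (l : List σ) (q : Q) (h : trace A q l ≠ []) :
    A.step ((trace A q l).getLast h).1 ((trace A q l).getLast h).2 = A.evalFrom q l := by
  induction l generalizing q with
  | nil => simp at h
  | cons a l ih =>
      cases l with
      | nil => simp [DFA.evalFrom]
      | cons b l =>
          have h2 : trace A (A.step q a) (b :: l) ≠ [] := by simp
          have e : (trace A q (a :: b :: l)).getLast h
              = (trace A (A.step q a) (b :: l)).getLast h2 := List.getLast_cons h2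
          rw [e]
          exact ih (A.step q a) h2

lemma trace_of_chain (A : DFA σ Q) (L : List (Q × σ)) (q : Q)
    (hc : L.Chain' (fun d₁ d₂ => A.step d₁.1 d₁.2 = d₂.1))
    (hh : ∀ h : L ≠ [], (L.head h).1 = q) :
    trace A q (L.map Prod.snd) = L := by
  induction L generalizing q with
  | nil => rfl
  | cons x L ih =>
      have hx : x.1 = q := hh (by simp)
      rw [List.map_cons, trace_cons]
      congr 1
      · rcases x with ⟨x1, x2⟩
        cases hx
        rfl
      · rw [List.Chain', List.isChain_cons] at hc
        refine ih _ hc.2 ?_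
        intro h
        cases L with
        | nil => simp at h
        | cons y L =>
            have := hc.1 y (by simp)
            simp only [List.head_cons]
            rw [← this, hx]

lemma map_tgt_eq (A : DFA σ Q) :
    ∀ (L : List (Q × σ)) (h : L ≠ []),
      L.Chain' (fun d₁ d₂ => A.step d₁.1 d₁.2 = d₂.1) →
      L.map (fun d => A.step d.1 d.2) =
        (L.map Prod.fst).tail ++ [A.step (L.getLast h).1 (L.getLast h).2]
  | [], h, _ => absurd rfl h
  | [x], _, _ => by simp
  | x :: y :: L, _, hc => by
      rw [List.Chain', List.isChain_cons_cons] at hc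
      have ih := map_tgt_eq A (y :: L) (by simp) hc.2
      rw [List.getLast_cons (by simp)]
      simp only [List.map_cons, List.tail_cons] at ih ⊢
      rw [ih, hc.1]
      simp

end Trace

section Reach
variable {σ Q : Type}

lemma reach_fst (A : DFA σ Q) (pos : Q × σ → Prop) :
    ∀ (L : List (Q × σ)), L.Chain' (fun d₁ d₂ => A.step d₁.1 d₁.2 = d₂.1) →
      (∀ e ∈ L, pos e) → ∀ d ∈ L, ∀ h : L ≠ [],
      ReflTransGen (fun x y => ∃ d : Q × σ, pos d ∧ d.1 = x ∧ A.step d.1 d.2 = y)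
        ((L.head h).1) d.1
  | [], _, _, d, hd, h => absurd rfl h
  | x :: L, hc, hp, d, hd, _ => by
      rcases List.mem_cons.mp hd with rfl | hd'
      · exact ReflTransGen.refl
      · have hL : L ≠ [] := List.ne_nil_of_mem hd'
        rw [List.Chain', List.isChain_cons] at hc
        have ih := reach_fst A pos L hc.2 (fun e he => hp e (List.mem_cons_of_mem _ he)) d hd' hL
        refine ReflTransGen.head ?_ ih
        refine ⟨x, hp x (List.mem_cons_self), rfl, ?_⟩
        have := hc.1 (L.head hL) (by simp [List.head?_eq_head hL])
        simpa [List.head_cons] using this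

lemma reach_last (A : DFA σ Q) (pos : Q × σ → Prop) :
    ∀ (L : List (Q × σ)), L.Chain' (fun d₁ d₂ => A.step d₁.1 d₁.2 = d₂.1) →
      (∀ e ∈ L, pos e) → ∀ d ∈ L, ∀ h : L ≠ [],
      ReflTransGen (fun x y => ∃ d : Q × σ, pos d ∧ d.1 = x ∧ A.step d.1 d.2 = y)
        (A.step d.1 d.2) (A.step ((L.getLast h).1) ((L.getLast h).2))
  | [], _, _, d, hd, h => absurd rfl h
  | [x], _, _, d, hd, _ => by
      rcases List.mem_singleton.mp hd with rfl
      simp [ReflTransGen.refl]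
  | x :: y :: L, hc, hp, d, hd, _ => by
      rw [List.Chain', List.isChain_cons_cons] at hc
      have hyL : (y :: L) ≠ [] := by simp
      have hp' : ∀ e ∈ y :: L, pos e := fun e he => hp e (List.mem_cons_of_mem _ he)
      have glast : (x :: y :: L).getLast (by simp) = (y :: L).getLast hyL :=
        List.getLast_cons hyL
      rw [glast]
      rcases List.mem_cons.mp hd with rfl | hd'
      · have ih := reach_last A pos (y :: L) hc.2 hp' y (List.mem_cons_self) hyL
        refine ReflTransGen.head ?_ ih
        exact ⟨y, hp' y (List.mem_cons_self), hc.1.symm, rfl⟩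
      · exact reach_last A pos (y :: L) hc.2 hp' d hd' hyL

end Reach

section Main
variable {σ Q : Type} [Fintype σ] [Fintype Q] [DecidableEq σ] [DecidableEq Q]

/-- The count vector of a closed walk at the start state is a Parikh flow. -/
lemma countvec_mem_flows (A : DFA σ Q) (p : σ → ℕ) (L : List (Q × σ))
    (hc : L.Chain' (fun d₁ d₂ => A.step d₁.1 d₁.2 = d₂.1))
    (hcl : ∀ h : L ≠ [], (L.head h).1 = A.start ∧
      A.step (L.getLast h).1 (L.getLast h).2 = A.start)
    (hp : ∀ a : σ, p a = ∑ q : Q, L.count (q, a)) :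
    (fun d => L.count d) ∈ parikhFlows A p := by
  have hrot : ∀ v : Q,
      (L.map (fun d => A.step d.1 d.2)).count v = (L.map Prod.fst).count v := by
    intro v
    rcases eq_or_ne L [] with rfl | hne
    · simp
    · rw [map_tgt_eq A L hne hc, (hcl hne).2]
      have hhead : L.map Prod.fst = A.start :: (L.map Prod.fst).tail := by
        have hm : L.map Prod.fst ≠ [] := by simpa using hne
        conv_lhs => rw [← List.cons_head_tail hm]
        congr 1
        rw [← (hcl hne).1]
        cases L with
        | nil => exact absurd rfl hne
        | cons x L => simp
      conv_rhs => rw [hhead]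
      simp [List.count_append, List.count_cons]
  refine ⟨hp, ?_, ?_⟩
  · intro v
    have h1 := count_map_eq_sum (fun d : Q × σ => A.step d.1 d.2) L v
    have h2 := sum_count_fst L v
    simp only []
    rw [← h1, hrot v, ← h2]
  · -- connectivity
    set pos : Q × σ → Prop := fun d => 0 < L.count d with hpos
    have hp' : ∀ e ∈ L, pos e := fun e he => List.count_pos_iff.mpr he
    have key : ∀ u ∈ ({A.start} : Set Q) ∪ {q | ∃ a : σ, 0 < L.count (q, a)} ∪
        {q | ∃ d : Q × σ, 0 < L.count d ∧ A.step d.1 d.2 = q},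
        ReflTransGen (fun x y => ∃ d : Q × σ, pos d ∧ d.1 = x ∧ A.step d.1 d.2 = y)
          A.start u ∧
        ReflTransGen (fun x y => ∃ d : Q × σ, pos d ∧ d.1 = x ∧ A.step d.1 d.2 = y)
          u A.start := by
      rintro u ((hu | ⟨a, ha⟩) | ⟨d, hd0, hdt⟩)
      · rcases hu with rfl
        exact ⟨ReflTransGen.refl, ReflTransGen.refl⟩
      · have hd : (u, a) ∈ L := List.count_pos_iff.mp ha
        have hne : L ≠ [] := List.ne_nil_of_mem hd
        constructor
        · have h1 := reach_fst A pos L hc hp' (u, a) hd hne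
          rwa [(hcl hne).1] at h1
        · have h2 := reach_last A pos L hc hp' (u, a) hd hne
          rw [(hcl hne).2] at h2
          exact ReflTransGen.head ⟨(u, a), ha, rfl, rfl⟩ h2
      · have hd : d ∈ L := List.count_pos_iff.mp hd0
        have hne : L ≠ [] := List.ne_nil_of_mem hd
        constructor
        · have h1 := reach_fst A pos L hc hp' d hd hne
          rw [(hcl hne).1] at h1
          exact h1.tail ⟨d, hd0, rfl, hdt⟩
        · have h2 := reach_last A pos L hc hp' d hd hne
          rw [(hcl hne).2, hdt] at h2
          exact h2
    intro u hu v hv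
    exact ((key u hu).2).trans ((key v hv).1)

lemma flows_finite (A : DFA σ Q) (p : σ → ℕ) : (parikhFlows A p).Finite := by
  have : parikhFlows A p ⊆ Set.univ.pi (fun d : Q × σ => Set.Iic (p d.2)) := by
    rintro w ⟨h1, -, -⟩ d -
    have : w (d.1, d.2) ≤ ∑ q : Q, w (q, d.2) :=
      Finset.single_le_sum (f := fun q : Q => w (q, d.2)) (fun _ _ => Nat.zero_le _)
        (Finset.mem_univ d.1)
    simpa [← h1 d.2] using this
  exact Set.Finite.subset (Set.Finite.pi fun d => Set.finite_Iic _) this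

lemma fib_finite (A : DFA σ Q) (w : Q × σ → ℕ) :
    Finite {L : List (Q × σ) //
      L.Chain' (fun d₁ d₂ => A.step d₁.1 d₁.2 = d₂.1) ∧
      (∀ h : L ≠ [], (L.head h).1 = A.start ∧
        A.step (L.getLast h).1 (L.getLast h).2 = A.start) ∧
      ∀ d : Q × σ, L.count d = w d} := by
  have hsub : {L : List (Q × σ) |
      L.Chain' (fun d₁ d₂ => A.step d₁.1 d₁.2 = d₂.1) ∧
      (∀ h : L ≠ [], (L.head h).1 = A.start ∧
        A.step (L.getLast h).1 (L.getLast h).2 = A.start) ∧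
      ∀ d : Q × σ, L.count d = w d} ⊆ {L : List (Q × σ) | L.length ≤ ∑ d : Q × σ, w d} := by
    rintro L ⟨-, -, h3⟩
    have := length_eq_sum_count L
    simp only [Set.mem_setOf_eq, this]
    exact le_of_eq (Finset.sum_congr rfl fun d _ => h3 d)
  exact Set.Finite.to_subtype (Set.Finite.subset (List.finite_length_le _ _) hsub)

end Main

end PC

/-- For a well-formed DFA `A` (its set of accepting states is the singleton consisting
of its start state) and a Parikh vector `p`,
`N(A,p) = Σ_{w ∈ W(A,p)} e_{q₀}(A,w)`. -/
theorem parikhCount_eq_sum_closedWalkCount {σ Q : Type}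
    [Fintype σ] [Fintype Q] [DecidableEq σ] [DecidableEq Q]
    (A : DFA σ Q) (hwf : A.accept = {A.start}) (p : σ → ℕ) :
    parikhCount A p = ∑ᶠ w ∈ parikhFlows A p, closedWalkCount A w := by
  classical
  have hWfin : (parikhFlows A p).Finite := PC.flows_finite A p
  set Wfin : Finset (Q × σ → ℕ) := hWfin.toFinset with hWfinDef
  -- the fiber type
  let Fib : (Q × σ → ℕ) → Type := fun w => {L : List (Q × σ) //
    L.Chain' (fun d₁ d₂ => A.step d₁.1 d₁.2 = d₂.1) ∧
    (∀ h : L ≠ [], (L.head h).1 = A.start ∧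
      A.step (L.getLast h).1 (L.getLast h).2 = A.start) ∧
    ∀ d : Q × σ, L.count d = w d}
  have hFibCard : ∀ w, closedWalkCount A w = Nat.card (Fib w) := fun _ => rfl
  -- the equivalence
  have e : {l : List σ // l ∈ A.accepts ∧ ∀ a : σ, l.count a = p a} ≃
      Σ w : {w // w ∈ Wfin}, Fib w.val := by
    refine
      { toFun := fun l => ⟨⟨fun d => (PC.trace A A.start l.val).count d, ?_⟩,
          ⟨PC.trace A A.start l.val, PC.trace_chain' A A.start l.val, ?_, fun d => rfl⟩⟩
        invFun := fun x => ⟨x.2.val.map Prod.snd, ?_, ?_⟩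
        left_inv := ?_
        right_inv := ?_ }
    · -- membership in Wfin
      rw [hWfinDef, Set.Finite.mem_toFinset]
      refine PC.countvec_mem_flows A p _ (PC.trace_chain' A A.start l.val) ?_ ?_
      · intro h
        refine ⟨PC.trace_head A A.start l.val h, ?_⟩
        rw [PC.trace_getLast A l.val A.start h]
        have := l.2.1
        rw [DFA.mem_accepts, hwf] at this
        exact this
      · intro a
        rw [PC.sum_count_snd, PC.trace_map_snd, l.2.2 a]
    · -- closed walk conditions
      intro h
      refine ⟨PC.trace_head A A.start l.val h, ?_⟩
      rw [PC.trace_getLast A l.val A.start h]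
      have := l.2.1
      rw [DFA.mem_accepts, hwf] at this
      exact this
    · -- word accepted
      rcases x with ⟨⟨w, hw⟩, ⟨L, hL⟩⟩
      rw [DFA.mem_accepts, hwf]
      rcases eq_or_ne L [] with rfl | hne
      · simp [DFA.eval, DFA.evalFrom]
      · have ht : PC.trace A A.start (L.map Prod.snd) = L :=
          PC.trace_of_chain A L A.start hL.1 (fun h => (hL.2.1 h).1)
        have h' : PC.trace A A.start (L.map Prod.snd) ≠ [] := by rw [ht]; exact hne
        have key := PC.trace_getLast A (L.map Prod.snd) A.start h'
        simp only [ht] at key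
        show A.eval (L.map Prod.snd) ∈ ({A.start} : Set Q)
        have : A.eval (L.map Prod.snd) = A.evalFrom A.start (L.map Prod.snd) := rfl
        rw [this, ← key, (hL.2.1 hne).2]
        exact rfl
    · -- counts
      rcases x with ⟨⟨w, hw⟩, ⟨L, hL⟩⟩
      intro a
      rw [← PC.sum_count_snd]
      have hwmem : w ∈ parikhFlows A p := (Set.Finite.mem_toFinset _).mp hw
      rw [show (∑ q : Q, L.count (q, a)) = ∑ q : Q, w (q, a) from
        Finset.sum_congr rfl fun q _ => hL.2.2 (q, a)]
      exact (hwmem.1 a).symm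
    · -- left inverse
      intro l
      exact Subtype.ext (by simp)
    · -- right inverse
      rintro ⟨⟨w, hw⟩, ⟨L, hL⟩⟩
      have ht : PC.trace A A.start (L.map Prod.snd) = L :=
        PC.trace_of_chain A L A.start hL.1 (fun h => (hL.2.1 h).1)
      have hwe : (fun d => (PC.trace A A.start (L.map Prod.snd)).count d) = w := by
        funext d
        rw [ht]
        exact hL.2.2 d
      refine Sigma.ext (Subtype.ext hwe) ?_
      refine (Subtype.heq_iff_coe_eq ?_).mpr ht
      have hwe' : ∀ d, (PC.trace A A.start (L.map Prod.snd)).count d = w d :=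
        fun d => congrFun hwe d
      intro x
      simp only [hwe']
  rw [parikhCount, Nat.card_congr e]
  haveI : ∀ w : {w // w ∈ Wfin}, Finite (Fib w.val) := fun w => PC.fib_finite A w.val
  haveI : ∀ w : {w // w ∈ Wfin}, Fintype (Fib w.val) := fun w => Fintype.ofFinite _
  rw [Nat.card_eq_fintype_card, Fintype.card_sigma]
  have hsum : ∑ w : {w // w ∈ Wfin}, Fintype.card (Fib w.val)
      = ∑ w ∈ Wfin, closedWalkCount A w := by
    rw [← Finset.sum_coe_sort Wfin (fun w => closedWalkCount A w)]
    exact Finset.sum_congr rfl fun w _ => by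
      rw [hFibCard, Nat.card_eq_fintype_card]
  rw [hsum, ← finsum_mem_coe_finset, hWfinDef, Set.Finite.coe_toFinset]
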